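/- Let λ be a linear functional on Π(ℝ^d) vanishing on polynomials of degree < k. With p_{a,β}(x) := ‖x‖^(2a) x^β, one has (λ⊗λ)‖x−y‖^(2k) = (−1)^k ∑_{b: k−b even, 0≤b≤k} 2^b · k!/(((k−b)/2)!)² · ∑_{|β|=b} (λ p_{(k−b)/2,β})² / β!. -/

import Mathlib

open MvPolynomial Finset

noncomputable section

/-- The multi-index on the first (`x`) block of variables of a monomial in `Fin d ⊕ Fin d`. -/
def xpart {d : ℕ} (m : (Fin d ⊕ Fin d) →₀ ℕ) : Fin d →₀ ℕ :=
  Finsupp.equivFunOnFinite.symm fun i => m (Sum.inl i)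

/-- The multi-index on the second (`y`) block of variables. -/
def ypart {d : ℕ} (m : (Fin d ⊕ Fin d) →₀ ℕ) : Fin d →₀ ℕ :=
  Finsupp.equivFunOnFinite.symm fun i => m (Sum.inr i)

/-- `(l ⊗ m) f`: apply `l` in the `x`-variables and `m` in the `y`-variables of a
two-block polynomial `f`, via its canonical representation as a sum of products
of monomials in `x` and monomials in `y`. -/
def tensorApply {d : ℕ} (l m : Module.Dual ℝ (MvPolynomial (Fin d) ℝ))
    (f : MvPolynomial (Fin d ⊕ Fin d) ℝ) : ℝ :=
  ∑ mo ∈ f.support, f.coeff mo * l (monomial (xpart mo) 1) * m (monomial (ypart mo) 1)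

/-- Apply the linear functional `l` in the second (`y`) block of variables,
yielding a polynomial in the first (`x`) block of variables. -/
def applySecond {d : ℕ} (l : Module.Dual ℝ (MvPolynomial (Fin d) ℝ))
    (f : MvPolynomial (Fin d ⊕ Fin d) ℝ) : MvPolynomial (Fin d) ℝ :=
  ∑ mo ∈ f.support, monomial (xpart mo) (f.coeff mo * l (monomial (ypart mo) 1))

/-- The polynomial `(x,y) ↦ ‖x-y‖^(2k)` in the `2d` variables `x(1),…,x(d),y(1),…,y(d)`. -/
def distPoly (d k : ℕ) : MvPolynomial (Fin d ⊕ Fin d) ℝ :=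
  (∑ i : Fin d, (X (Sum.inl i) - X (Sum.inr i)) ^ 2) ^ k

/-- `l` vanishes on all polynomials of total degree `< k` (i.e. `l ⊥ Π_{<k}`). -/
def VanishesLT {d : ℕ} (l : Module.Dual ℝ (MvPolynomial (Fin d) ℝ)) (k : ℕ) : Prop :=
  ∀ p : MvPolynomial (Fin d) ℝ, p.totalDegree < k → l p = 0

/-- `l` vanishes on all polynomials of total degree `≤ k` (i.e. `l ⊥ Π_{≤k}`). -/
def VanishesLE {d : ℕ} (l : Module.Dual ℝ (MvPolynomial (Fin d) ℝ)) (k : ℕ) : Prop :=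
  ∀ p : MvPolynomial (Fin d) ℝ, p.totalDegree ≤ k → l p = 0

/-- `p_{a,β} : x ↦ ‖x‖^(2a) x^β` as a polynomial. -/
def pPoly (d : ℕ) (a : ℕ) (β : Fin d →₀ ℕ) : MvPolynomial (Fin d) ℝ :=
  (∑ i : Fin d, X i ^ 2) ^ a * monomial β 1

namespace TensorAux

variable {d : ℕ}

lemma xpart_apply (mo : (Fin d ⊕ Fin d) →₀ ℕ) (i : Fin d) : xpart mo i = mo (Sum.inl i) :=
  Finsupp.equivFunOnFinite_symm_apply_apply _ _

lemma ypart_apply (mo : (Fin d ⊕ Fin d) →₀ ℕ) (i : Fin d) : ypart mo i = mo (Sum.inr i) :=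
  Finsupp.equivFunOnFinite_symm_apply_apply _ _

lemma xpart_inl (α : Fin d →₀ ℕ) : xpart (Finsupp.mapDomain Sum.inl α) = α := by
  ext i; rw [xpart_apply, Finsupp.mapDomain_apply Sum.inl_injective]

lemma xpart_inr (γ : Fin d →₀ ℕ) : xpart (Finsupp.mapDomain Sum.inr γ) = 0 := by
  ext i; rw [xpart_apply, Finsupp.mapDomain_notin_range]; · rfl
  · simp

lemma ypart_inr (γ : Fin d →₀ ℕ) : ypart (Finsupp.mapDomain Sum.inr γ) = γ := by
  ext i; rw [ypart_apply, Finsupp.mapDomain_apply Sum.inr_injective]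

lemma ypart_inl (α : Fin d →₀ ℕ) : ypart (Finsupp.mapDomain Sum.inl α) = 0 := by
  ext i; rw [ypart_apply, Finsupp.mapDomain_notin_range]; · rfl
  · simp

lemma xpart_add (a b : (Fin d ⊕ Fin d) →₀ ℕ) : xpart (a + b) = xpart a + xpart b := by
  ext i; simp [xpart_apply]

lemma ypart_add (a b : (Fin d ⊕ Fin d) →₀ ℕ) : ypart (a + b) = ypart a + ypart b := by
  ext i; simp [ypart_apply]

variable (l m : Module.Dual ℝ (MvPolynomial (Fin d) ℝ))

lemma tensorApply_sum_subset {f : MvPolynomial (Fin d ⊕ Fin d) ℝ}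
    {s : Finset ((Fin d ⊕ Fin d) →₀ ℕ)} (hs : f.support ⊆ s) :
    tensorApply l m f
      = ∑ mo ∈ s, f.coeff mo * l (monomial (xpart mo) 1) * m (monomial (ypart mo) 1) := by
  refine Finset.sum_subset hs fun x _ hx => ?_
  rw [MvPolynomial.notMem_support_iff.mp hx]; ring

lemma tensorApply_add (f g : MvPolynomial (Fin d ⊕ Fin d) ℝ) :
    tensorApply l m (f + g) = tensorApply l m f + tensorApply l m g := by
  rw [tensorApply_sum_subset l m (MvPolynomial.support_add ..),
    tensorApply_sum_subset l m (s := f.support ∪ g.support) subset_union_left,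
    tensorApply_sum_subset l m (s := f.support ∪ g.support) subset_union_right,
    ← Finset.sum_add_distrib]
  refine Finset.sum_congr rfl fun x _ => ?_
  rw [coeff_add]; ring

lemma tensorApply_smul (c : ℝ) (f : MvPolynomial (Fin d ⊕ Fin d) ℝ) :
    tensorApply l m (c • f) = c * tensorApply l m f := by
  rw [tensorApply_sum_subset l m (s := f.support) (MvPolynomial.support_smul), tensorApply, mul_sum]
  refine Finset.sum_congr rfl fun x _ => ?_
  rw [MvPolynomial.coeff_smul, smul_eq_mul]; ring

/-- `tensorApply l m` as a linear map. -/
def tensorL : MvPolynomial (Fin d ⊕ Fin d) ℝ →ₗ[ℝ] ℝ where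
  toFun := tensorApply l m
  map_add' := tensorApply_add l m
  map_smul' := tensorApply_smul l m

lemma tensorApply_monomial (mo : (Fin d ⊕ Fin d) →₀ ℕ) (c : ℝ) :
    tensorApply l m (monomial mo c)
      = c * (l (monomial (xpart mo) 1) * m (monomial (ypart mo) 1)) := by
  rcases eq_or_ne c 0 with rfl | hc
  · simp [tensorApply]
  · rw [tensorApply, support_monomial, if_neg hc, Finset.sum_singleton, coeff_monomial,
      if_pos rfl, mul_assoc]

lemma tensorApply_rename_mul (p q : MvPolynomial (Fin d) ℝ) :
    tensorApply l m (rename Sum.inl p * rename Sum.inr q) = l p * m q := by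
  induction p using MvPolynomial.induction_on' with
  | add p1 p2 h1 h2 =>
    rw [map_add, add_mul, tensorApply_add, h1, h2, map_add, add_mul]
  | monomial α a =>
    induction q using MvPolynomial.induction_on' with
    | add q1 q2 h1 h2 =>
      rw [map_add, mul_add, tensorApply_add, h1, h2, map_add, mul_add]
    | monomial γ c =>
      rw [rename_monomial, rename_monomial, monomial_mul, tensorApply_monomial,
        xpart_add, ypart_add, xpart_inl, xpart_inr, ypart_inl, ypart_inr, add_zero, zero_add]
      have ha : (monomial α a : MvPolynomial (Fin d) ℝ) = a • monomial α 1 := by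
        rw [MvPolynomial.smul_monomial, smul_eq_mul, mul_one]
      have hc : (monomial γ c : MvPolynomial (Fin d) ℝ) = c • monomial γ 1 := by
        rw [MvPolynomial.smul_monomial, smul_eq_mul, mul_one]
      rw [ha, hc, map_smul, map_smul]
      simp only [smul_eq_mul]; ring

lemma monomial_one_eq_prod (β : Fin d →₀ ℕ) :
    (monomial β (1:ℝ) : MvPolynomial (Fin d) ℝ) = ∏ i, X i ^ β i := by
  rw [monomial_eq, C_1, one_mul, Finsupp.prod_fintype]
  intro i; exact pow_zero _

lemma rename_pPoly (f : Fin d → Fin d ⊕ Fin d) (a : ℕ) (β : Fin d →₀ ℕ) :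
    rename f (pPoly d a β)
      = (∑ i : Fin d, X (f i) ^ 2) ^ a * ∏ i : Fin d, X (f i) ^ β i := by
  rw [pPoly, map_mul, map_pow, map_sum, monomial_one_eq_prod, map_prod]
  simp only [map_pow, rename_X]

lemma distPoly_expand (k : ℕ) :
    distPoly d k = ∑ j ∈ range (k+1), ∑ i ∈ range (k - j + 1),
      ∑ β ∈ piAntidiag (univ : Finset (Fin d)) j,
        ((-2:ℝ)^j * (k.choose j) * ((k-j).choose i) * (Nat.multinomial univ β)) •
          (rename Sum.inl (pPoly d i (Finsupp.equivFunOnFinite.symm β)) *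
           rename Sum.inr (pPoly d (k-j-i) (Finsupp.equivFunOnFinite.symm β))) := by
  set A : MvPolynomial (Fin d ⊕ Fin d) ℝ := ∑ i : Fin d, X (Sum.inl i) ^ 2 with hA
  set C' : MvPolynomial (Fin d ⊕ Fin d) ℝ := ∑ i : Fin d, X (Sum.inr i) ^ 2 with hC
  set B : MvPolynomial (Fin d ⊕ Fin d) ℝ := ∑ i : Fin d, X (Sum.inl i) * X (Sum.inr i) with hB
  have hS : (∑ i : Fin d, (X (Sum.inl i) - X (Sum.inr i)) ^ 2 : MvPolynomial (Fin d ⊕ Fin d) ℝ)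
      = (-2) * B + (A + C') := by
    rw [hA, hB, hC, Finset.mul_sum, ← Finset.sum_add_distrib, ← Finset.sum_add_distrib]
    refine Finset.sum_congr rfl fun i _ => ?_; ring
  rw [distPoly, hS, add_pow]
  refine Finset.sum_congr rfl fun j hj => ?_
  rw [add_pow, Finset.mul_sum, Finset.sum_mul]
  refine Finset.sum_congr rfl fun i hi => ?_
  rw [mul_pow, Finset.sum_pow_eq_sum_piAntidiag, Finset.mul_sum, Finset.sum_mul, Finset.sum_mul]
  refine Finset.sum_congr rfl fun β hβ => ?_
  rw [rename_pPoly, rename_pPoly]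
  simp only [Finsupp.equivFunOnFinite_symm_apply_apply]
  have h2 : ((-2 : MvPolynomial (Fin d ⊕ Fin d) ℝ)) = C (-2 : ℝ) := by
    rw [map_neg, map_ofNat]
  have hprod : (∏ i : Fin d, (X (Sum.inl i) * X (Sum.inr i)) ^ β i :
      MvPolynomial (Fin d ⊕ Fin d) ℝ)
      = (∏ i : Fin d, X (Sum.inl i) ^ β i) * ∏ i : Fin d, X (Sum.inr i) ^ β i := by
    rw [← Finset.prod_mul_distrib]
    refine Finset.prod_congr rfl fun i _ => mul_pow _ _ _
  rw [hprod, smul_eq_C_mul, h2, ← map_pow]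
  simp only [← C_eq_coe_nat, Nat.cast_id, map_mul]
  ring

lemma pPoly_totalDegree_le (a : ℕ) (β : Fin d →₀ ℕ) :
    (pPoly d a β).totalDegree ≤ 2*a + ∑ i, β i := by
  refine (totalDegree_mul _ _).trans (add_le_add ?_ ?_)
  · refine (totalDegree_pow _ _).trans ?_
    have h2 : (∑ i : Fin d, (X i : MvPolynomial (Fin d) ℝ)^2).totalDegree ≤ 2 := by
      refine (totalDegree_finset_sum _ _).trans ?_
      refine Finset.sup_le fun i _ => ?_
      simpa [totalDegree_X] using totalDegree_pow (X i : MvPolynomial (Fin d) ℝ) 2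
    calc a * (∑ i : Fin d, (X i : MvPolynomial (Fin d) ℝ)^2).totalDegree
        ≤ a * 2 := Nat.mul_le_mul_left a h2
      _ = 2 * a := Nat.mul_comm _ _
  · refine (totalDegree_monomial_le _ _).trans ?_
    rw [Finsupp.sum_fintype _ _ fun i => rfl]
    simp

lemma coefNat (k j i : ℕ) (hj : j ≤ k) (hi : 2*i = k - j) (β : Fin d → ℕ)
    (hβ : ∑ x, β x = j) :
    (k.choose j) * ((k-j).choose i) * Nat.multinomial univ β *
      ((∏ x, Nat.factorial (β x)) * (Nat.factorial i * Nat.factorial i))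
      = Nat.factorial k := by
  have h1 : (∏ x, Nat.factorial (β x)) * Nat.multinomial univ β = Nat.factorial j := by
    rw [Nat.multinomial_spec, hβ]
  have h2 : (k-j).choose i * Nat.factorial i * Nat.factorial i = Nat.factorial (k-j) := by
    have hile : i ≤ k - j := by omega
    have := Nat.choose_mul_factorial_mul_factorial hile
    rwa [show k - j - i = i by omega] at this
  have h3 : k.choose j * Nat.factorial j * Nat.factorial (k-j) = Nat.factorial k :=
    Nat.choose_mul_factorial_mul_factorial hj
  calc (k.choose j) * ((k-j).choose i) * Nat.multinomial univ β *
        ((∏ x, Nat.factorial (β x)) * (Nat.factorial i * Nat.factorial i))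
      = (k.choose j) * ((∏ x, Nat.factorial (β x)) * Nat.multinomial univ β) *
          ((k-j).choose i * Nat.factorial i * Nat.factorial i) := by ring
    _ = Nat.factorial k := by rw [h1, h2, h3]

end TensorAux

/-- For `λ ⊥ Π_{<k}`,
`(λ⊗λ)‖x−y‖^(2k) = (−1)^k ∑_{k−b even} 2^b k!/(((k−b)/2)!)² ∑_{|β|=b} (λ p_{(k−b)/2,β})²/β!`. -/
theorem tensor_sq_dist_eq_sum_of_squares (d k : ℕ)
    (l : Module.Dual ℝ (MvPolynomial (Fin d) ℝ)) (h : VanishesLT l k) :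
    tensorApply l l (distPoly d k) =
      (-1 : ℝ) ^ k * ∑ b ∈ (range (k + 1)).filter (fun b => Even (k - b)),
        (2 : ℝ) ^ b * ((k.factorial : ℝ) / (((k - b) / 2).factorial : ℝ) ^ 2) *
          ∑ β ∈ finsuppAntidiag (univ : Finset (Fin d)) b,
            (l (pPoly d ((k - b) / 2) β)) ^ 2 / ((β.prod fun _ e => e.factorial : ℕ) : ℝ) := by
  classical
  -- Step 1: apply the tensor functional to the expansion of `distPoly`.
  have happ : tensorApply l l (distPoly d k)
      = ∑ j ∈ range (k+1), ∑ i ∈ range (k-j+1),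
          ∑ β ∈ piAntidiag (univ : Finset (Fin d)) j,
            ((-2:ℝ)^j * (k.choose j) * ((k-j).choose i) * (Nat.multinomial univ β)) *
              (l (pPoly d i (Finsupp.equivFunOnFinite.symm β)) *
               l (pPoly d (k-j-i) (Finsupp.equivFunOnFinite.symm β))) := by
    have hT : tensorApply l l (distPoly d k) = TensorAux.tensorL l l (distPoly d k) := rfl
    rw [hT, TensorAux.distPoly_expand k, map_sum]
    refine Finset.sum_congr rfl fun j _ => ?_
    rw [map_sum]
    refine Finset.sum_congr rfl fun i _ => ?_
    rw [map_sum]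
    refine Finset.sum_congr rfl fun β _ => ?_
    rw [map_smul, smul_eq_mul]
    congr 1
    exact TensorAux.tensorApply_rename_mul l l _ _
  rw [happ, Finset.mul_sum, Finset.sum_filter]
  refine Finset.sum_congr rfl fun j hj => ?_
  have hjk : j ≤ k := Nat.lt_succ_iff.mp (mem_range.mp hj)
  -- vanishing of off-diagonal terms
  have key0 : ∀ i : ℕ, i ≤ k - j → 2*i ≠ k - j → ∀ β : Fin d → ℕ, (∑ x, β x) = j →
      l (pPoly d i (Finsupp.equivFunOnFinite.symm β)) *
        l (pPoly d (k-j-i) (Finsupp.equivFunOnFinite.symm β)) = 0 := by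
    intro i hile hne β hβ
    have hs : (∑ x, (Finsupp.equivFunOnFinite.symm β : Fin d →₀ ℕ) x) = j := by
      simpa [Finsupp.equivFunOnFinite_symm_apply_apply] using hβ
    rcases lt_or_gt_of_ne hne with hlt | hgt
    · have hdeg : (pPoly d i (Finsupp.equivFunOnFinite.symm β)).totalDegree < k := by
        refine lt_of_le_of_lt (TensorAux.pPoly_totalDegree_le _ _) ?_
        rw [hs]; omega
      rw [h _ hdeg, zero_mul]
    · have hdeg : (pPoly d (k-j-i) (Finsupp.equivFunOnFinite.symm β)).totalDegree < k := by
        refine lt_of_le_of_lt (TensorAux.pPoly_totalDegree_le _ _) ?_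
        rw [hs]; omega
      rw [h _ hdeg, mul_zero]
  by_cases he : Even (k - j)
  · rw [if_pos he]
    set i₀ := (k - j)/2 with hi₀
    have h2i : 2*i₀ = k - j := by
      obtain ⟨mm, hmm⟩ := he; omega
    -- only `i = i₀` survives
    rw [Finset.sum_eq_single_of_mem i₀ (by rw [mem_range]; omega)
      (fun i hi hne => Finset.sum_eq_zero fun β hβ => by
        have hβs : (∑ x, β x) = j := by
          have := (mem_piAntidiag.mp hβ).1; simpa using this
        rw [key0 i (by have := mem_range.mp hi; omega) (by omega) β hβs, mul_zero])]
    have hkji : k - j - i₀ = i₀ := by omega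
    rw [hkji]
    -- reindex `piAntidiag` ↔ `finsuppAntidiag` and match coefficients
    rw [Finset.mul_sum, Finset.mul_sum]
    refine Finset.sum_nbij' (fun β => Finsupp.equivFunOnFinite.symm β)
      (fun β' => ⇑β') ?_ ?_ ?_ ?_ ?_
    · intro β hβ
      rw [mem_finsuppAntidiag]
      refine ⟨?_, subset_univ _⟩
      have := (mem_piAntidiag.mp hβ).1
      simpa [Finsupp.equivFunOnFinite_symm_apply_apply] using this
    · intro β' hβ'
      rw [mem_piAntidiag]
      refine ⟨?_, fun _ _ => mem_univ _⟩
      exact (mem_finsuppAntidiag.mp hβ').1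
    · intro β hβ
      ext i; simp [Finsupp.equivFunOnFinite_symm_apply_apply]
    · intro β' hβ'
      exact Finsupp.equivFunOnFinite.symm_apply_apply β'
    · intro β hβ
      have hβs : (∑ x, β x) = j := by
        have := (mem_piAntidiag.mp hβ).1; simpa using this
      -- coefficient identity
      have hfact : ((Finsupp.equivFunOnFinite.symm β : Fin d →₀ ℕ).prod
          fun _ e => e.factorial) = ∏ x, Nat.factorial (β x) := by
        rw [Finsupp.prod_fintype _ _ fun i => rfl]
        simp [Finsupp.equivFunOnFinite_symm_apply_apply]
      have hsign : ((-2:ℝ))^j = (-1:ℝ)^k * 2^j := by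
        obtain ⟨mm, hmm⟩ := he
        have hk : k = j + 2*mm := by omega
        rw [show ((-2:ℝ)) = (-1) * 2 by norm_num, mul_pow, hk, pow_add, pow_mul]
        norm_num
      have hnat := TensorAux.coefNat k j i₀ hjk h2i β hβs
      have hne1 : ((Nat.factorial i₀ : ℝ)) ≠ 0 := Nat.cast_ne_zero.mpr (Nat.factorial_ne_zero _)
      have hne2 : ((∏ x, Nat.factorial (β x) : ℕ) : ℝ) ≠ 0 := by
        refine Nat.cast_ne_zero.mpr ?_
        exact Finset.prod_ne_zero_iff.mpr fun x _ => Nat.factorial_ne_zero _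
      have hcast : ((k.choose j : ℝ)) * ((k-j).choose i₀ : ℝ) * (Nat.multinomial univ β : ℝ) *
          (((∏ x, Nat.factorial (β x) : ℕ) : ℝ) * ((Nat.factorial i₀ : ℝ) * (Nat.factorial i₀ : ℝ)))
          = (Nat.factorial k : ℝ) := by
        exact_mod_cast congrArg (Nat.cast : ℕ → ℝ) hnat
      rw [hfact, hsign]
      set L := l (pPoly d i₀ (Finsupp.equivFunOnFinite.symm β)) with hL
      push_cast at hcast
      push_cast
      field_simp
      linear_combination (L^2) * hcast
  · rw [if_neg he]
    refine Finset.sum_eq_zero fun i hi => Finset.sum_eq_zero fun β hβ => ?_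
    have hβs : (∑ x, β x) = j := by
      have := (mem_piAntidiag.mp hβ).1; simpa using this
    have hne : 2*i ≠ k - j := fun hcon => he ⟨i, by omega⟩
    rw [key0 i (by have := mem_range.mp hi; omega) hne β hβs, mul_zero]
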